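/- Let p be prime, a ≤ b positive integers, and (x,y) a point on T_{p^a,p^b} such that p does not divide x or p does not divide y. Then there is exactly one line on T_{p^a,p^b} containing both the origin and (x,y). -/

import Mathlib

/-- A line on the discrete torus `ZMod m × ZMod n`: the image of an integer line
`{A + k•(u,v) : k ∈ ℤ}` with `gcd(u,v) = 1`. -/
def torusLine (m n : ℕ) (L : Set (ZMod m × ZMod n)) : Prop :=
  ∃ (A : ZMod m × ZMod n) (u v : ℤ), Int.gcd u v = 1 ∧
    L = {P | ∃ k : ℤ, P = (A.1 + ((k * u : ℤ) : ZMod m), A.2 + ((k * v : ℤ) : ZMod n))}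

/-- Three points of the torus are collinear if some line contains all three. -/
def torusCollinear (m n : ℕ) (P Q R : ZMod m × ZMod n) : Prop :=
  ∃ L, torusLine m n L ∧ P ∈ L ∧ Q ∈ L ∧ R ∈ L

/-- No three (distinct) points of `S` lie on a common line. -/
def noThreeInLine (m n : ℕ) (S : Set (ZMod m × ZMod n)) : Prop :=
  ∀ P ∈ S, ∀ Q ∈ S, ∀ R ∈ S, P ≠ Q → P ≠ R → Q ≠ R → ¬ torusCollinear m n P Q R

/-- `tau m n`: maximal number of points on the torus with no three collinear. -/
noncomputable def tau (m n : ℕ) : ℕ :=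
  sSup {k | ∃ S : Finset (ZMod m × ZMod n), noThreeInLine m n ↑S ∧ S.card = k}

lemma key (p a b : ℕ) (hp : p.Prime) (ha : 0 < a) (hab : a ≤ b)
    (x y : ℤ) (hxy : ¬ (p : ℤ) ∣ x ∨ ¬ (p : ℤ) ∣ y)
    (L : Set (ZMod (p ^ a) × ZMod (p ^ b)))
    (hL : torusLine (p ^ a) (p ^ b) L)
    (h0 : (0 : ZMod (p ^ a) × ZMod (p ^ b)) ∈ L)
    (hP : ((x : ZMod (p ^ a)), (y : ZMod (p ^ b))) ∈ L) :
    L = {P | ∃ s : ℤ, P = (((s * x : ℤ) : ZMod (p ^ a)), ((s * y : ℤ) : ZMod (p ^ b)))} := by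
  obtain ⟨A, u, v, hguv, rfl⟩ := hL
  obtain ⟨k0, hk0⟩ := h0
  obtain ⟨t0, ht0⟩ := hP
  have hA1 : A.1 = -((k0 * u : ℤ) : ZMod (p ^ a)) := by
    simpa using eq_neg_of_add_eq_zero_left (Prod.ext_iff.mp hk0).1.symm
  have hA2 : A.2 = -((k0 * v : ℤ) : ZMod (p ^ b)) := by
    simpa using eq_neg_of_add_eq_zero_left (Prod.ext_iff.mp hk0).2.symm
  set t : ℤ := t0 - k0 with htdef
  have hx : (x : ZMod (p ^ a)) = ((t * u : ℤ) : ZMod (p ^ a)) := by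
    have h := (Prod.ext_iff.mp ht0).1
    rw [hA1] at h
    push_cast [htdef] at h ⊢
    linear_combination h
  have hy : (y : ZMod (p ^ b)) = ((t * v : ℤ) : ZMod (p ^ b)) := by
    have h := (Prod.ext_iff.mp ht0).2
    rw [hA2] at h
    push_cast [htdef] at h ⊢
    linear_combination h
  push_cast at hx hy
  have hpa : (p : ℤ) ∣ ((p ^ a : ℕ) : ℤ) := by
    push_cast; exact dvd_pow_self _ ha.ne'
  have hpb : (p : ℤ) ∣ ((p ^ b : ℕ) : ℤ) := by
    push_cast; exact dvd_pow_self _ (ha.trans_le hab).ne'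
  have hpt : ¬ (p : ℤ) ∣ t := by
    intro hdvd
    have hx0 : ((x - t * u : ℤ) : ZMod (p ^ a)) = 0 := by push_cast; rw [hx]; ring
    have hy0 : ((y - t * v : ℤ) : ZMod (p ^ b)) = 0 := by push_cast; rw [hy]; ring
    have hdx : (p : ℤ) ∣ x - t * u :=
      dvd_trans hpa ((ZMod.intCast_zmod_eq_zero_iff_dvd _ _).mp hx0)
    have hdy : (p : ℤ) ∣ y - t * v :=
      dvd_trans hpb ((ZMod.intCast_zmod_eq_zero_iff_dvd _ _).mp hy0)
    have hpx : (p : ℤ) ∣ x := by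
      have : (p : ℤ) ∣ (x - t * u) + t * u := hdx.add (hdvd.mul_right u)
      simpa using this
    have hpy : (p : ℤ) ∣ y := by
      have : (p : ℤ) ∣ (y - t * v) + t * v := hdy.add (hdvd.mul_right v)
      simpa using this
    rcases hxy with h | h <;> exact h ‹_›
  -- t is invertible mod p^b (hence mod p^a)
  have hcop : IsCoprime ((p : ℤ) ^ b) t :=
    ((Prime.coprime_iff_not_dvd (Int.prime_iff_natAbs_prime.mpr (by simpa using hp))).mpr hpt).pow_left
  obtain ⟨c, d, hcd⟩ := hcop
  have hpb0 : (((p : ℤ) ^ b : ℤ) : ZMod (p ^ b)) = 0 := by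
    rw [ZMod.intCast_zmod_eq_zero_iff_dvd]; push_cast; rfl
  have hpa0 : (((p : ℤ) ^ b : ℤ) : ZMod (p ^ a)) = 0 := by
    rw [ZMod.intCast_zmod_eq_zero_iff_dvd]
    push_cast
    exact pow_dvd_pow _ hab
  have hdb : ((d * t : ℤ) : ZMod (p ^ b)) = 1 := by
    have h1 : ((c * (p : ℤ) ^ b + d * t : ℤ) : ZMod (p ^ b)) = 1 := by rw [hcd]; simp
    push_cast [hpb0] at h1 ⊢
    linear_combination h1
  have hda : ((d * t : ℤ) : ZMod (p ^ a)) = 1 := by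
    have h1 : ((c * (p : ℤ) ^ b + d * t : ℤ) : ZMod (p ^ a)) = 1 := by rw [hcd]; simp
    push_cast [hpa0] at h1 ⊢
    linear_combination h1
  ext P
  simp only [Set.mem_setOf_eq]
  constructor
  · rintro ⟨k, rfl⟩
    refine ⟨(k - k0) * d, ?_⟩
    rw [Prod.ext_iff]
    constructor
    · rw [hA1]
      push_cast [hx]
      push_cast at hda
      linear_combination (-((k : ZMod (p ^ a)) - k0) * u) * hda
    · rw [hA2]
      push_cast [hy]
      push_cast at hdb
      linear_combination (-((k : ZMod (p ^ b)) - k0) * v) * hdb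
  · rintro ⟨s, rfl⟩
    refine ⟨s * t + k0, ?_⟩
    rw [Prod.ext_iff]
    constructor
    · rw [hA1]
      push_cast
      linear_combination (s : ZMod (p ^ a)) * hx
    · rw [hA2]
      push_cast
      linear_combination (s : ZMod (p ^ b)) * hy

theorem stmt13 (p a b : ℕ) (hp : p.Prime) (ha : 0 < a) (hab : a ≤ b)
    (x y : ℤ) (hxy : ¬ (p : ℤ) ∣ x ∨ ¬ (p : ℤ) ∣ y) :
    ∃! L : Set (ZMod (p ^ a) × ZMod (p ^ b)), torusLine (p ^ a) (p ^ b) L ∧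
      (0 : ZMod (p ^ a) × ZMod (p ^ b)) ∈ L ∧ ((x : ZMod (p ^ a)), (y : ZMod (p ^ b))) ∈ L := by
  have hne : x ≠ 0 ∨ y ≠ 0 := by
    rcases hxy with h | h
    · exact Or.inl fun h0 => h (h0 ▸ dvd_zero _)
    · exact Or.inr fun h0 => h (h0 ▸ dvd_zero _)
  have hg : 0 < Int.gcd x y := Int.gcd_pos_iff.mpr hne
  set g : ℤ := (Int.gcd x y : ℤ) with hgdef
  set L0 : Set (ZMod (p ^ a) × ZMod (p ^ b)) :=
    {P | ∃ k : ℤ, P = ((0 : ZMod (p ^ a)) + ((k * (x / g) : ℤ) : ZMod (p ^ a)),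
      (0 : ZMod (p ^ b)) + ((k * (y / g) : ℤ) : ZMod (p ^ b)))} with hL0def
  have hline : torusLine (p ^ a) (p ^ b) L0 :=
    ⟨(0, 0), x / g, y / g, Int.gcd_div_gcd_div_gcd hg, rfl⟩
  have h0mem : (0 : ZMod (p ^ a) × ZMod (p ^ b)) ∈ L0 := ⟨0, by simp; rfl⟩
  have hxmem : ((x : ZMod (p ^ a)), (y : ZMod (p ^ b))) ∈ L0 := by
    refine ⟨g, ?_⟩
    rw [Int.mul_ediv_cancel' (show g ∣ x from Int.gcd_dvd_left x y), Int.mul_ediv_cancel' (show g ∣ y from Int.gcd_dvd_right x y)]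
    simp
  refine ⟨L0, ⟨hline, h0mem, hxmem⟩, fun L' hL' => ?_⟩
  rw [key p a b hp ha hab x y hxy L' hL'.1 hL'.2.1 hL'.2.2,
    key p a b hp ha hab x y hxy L0 hline h0mem hxmem]
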